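/- arXiv:2003.05749 — 2 statements merged into one kernel-verified Lean document; each statement's English description precedes it below -/
import Mathlib

section
/- Let α, β, γ ∈ ℝ with γ ≠ 0. Then (𝔤₂, g, J) is a first kind algebraic Wanas soliton associated to the canonical connection ∇⁰ if and only if α = β = 0 and the soliton constant satisfies 2γ² + c = 0; in that case the derivation D satisfies De₁ = 0, De₂ = γ²e₂, De₃ = 2γ²e₃. -/
noncomputable section

/-- The underlying vector space `ℝ³`. -/
abbrev V : Type := Fin 3 → ℝ

/-- The basis vector `e₁`. -/
def e1 : V := ![1, 0, 0]

/-- The basis vector `e₂`. -/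
def e2 : V := ![0, 1, 0]

/-- The basis vector `e₃`. -/
def e3 : V := ![0, 0, 1]

/-- The Lorentzian metric `g` with `g(e₁,e₁) = g(e₂,e₂) = 1`, `g(e₃,e₃) = -1`. -/
def g (x y : V) : ℝ := x 0 * y 0 + x 1 * y 1 - x 2 * y 2

/-- The Lie bracket. -/
def br (α β γ : ℝ) (x y : V) : V :=
  (x 0 * y 1 - x 1 * y 0) • (γ • e2 - β • e3) + (x 0 * y 2 - x 2 * y 0) • (-(β • e2) - γ • e3) +
    (x 1 * y 2 - x 2 * y 1) • (α • e1)

/-- The canonical connection `∇⁰`. -/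
def nab (α β γ : ℝ) (x y : V) : V :=
  (x 1 * y 0) • (-(γ • e2)) + (x 1 * y 1) • (γ • e1) + (x 2 * y 0) • ((α / 2) • e2) +
    (x 2 * y 1) • (-((α / 2) • e1))

/-- The torsion `T⁰(X,Y) = ∇⁰_X Y - ∇⁰_Y X - [X,Y]`. -/
def T (α β γ : ℝ) (x y : V) : V := nab α β γ x y - nab α β γ y x - br α β γ x y

/-- The tensor `A⁰(X,Y)Z = T⁰(T⁰(X,Y),Z)`. -/
def A (α β γ : ℝ) (x y z : V) : V := T α β γ (T α β γ x y) z

/-- The curvature `R⁰(X,Y)Z = ∇⁰_X ∇⁰_Y Z - ∇⁰_Y ∇⁰_X Z - ∇⁰_{[X,Y]} Z`. -/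
def Rc (α β γ : ℝ) (x y z : V) : V :=
  nab α β γ x (nab α β γ y z) - nab α β γ y (nab α β γ x z) - nab α β γ (br α β γ x y) z

/-- The Wanas tensor `W⁰(X,Y)Z = R⁰(X,Y)Z - A⁰(X,Y)Z`. -/
def W (α β γ : ℝ) (x y z : V) : V := Rc α β γ x y z - A α β γ x y z

/-- `w⁰(X,Y) = -g(W⁰(X,e₁)Y,e₁) - g(W⁰(X,e₂)Y,e₂) + g(W⁰(X,e₃)Y,e₃)`. -/
def w (α β γ : ℝ) (x y : V) : ℝ :=
  -g (W α β γ x e1 y) e1 - g (W α β γ x e2 y) e2 + g (W α β γ x e3 y) e3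

/-- `w̃⁰(X,Y) = (w⁰(X,Y) + w⁰(Y,X))/2`. -/
def wt (α β γ : ℝ) (x y : V) : ℝ := (w α β γ x y + w α β γ y x) / 2

/-- `D` is a derivation of the Lie algebra. -/
def IsDeriv (α β γ : ℝ) (D : V →ₗ[ℝ] V) : Prop :=
  ∀ x y, D (br α β γ x y) = br α β γ (D x) y + br α β γ x (D y)

lemma hw11 (α β γ : ℝ) : w α β γ e1 e1 = α*β/2 - 2*β^2 - 2*γ^2 := by
  simp only [w, W, Rc, A, T, nab, br, g, e1, e2, e3]; norm_num [Matrix.cons_val_two, Matrix.vecHead, Matrix.vecTail]; ring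
lemma hw12 (α β γ : ℝ) : w α β γ e1 e2 = 0 := by
  simp only [w, W, Rc, A, T, nab, br, g, e1, e2, e3]; norm_num [Matrix.cons_val_two, Matrix.vecHead, Matrix.vecTail]
lemma hw13 (α β γ : ℝ) : w α β γ e1 e3 = 0 := by
  simp only [w, W, Rc, A, T, nab, br, g, e1, e2, e3]; norm_num [Matrix.cons_val_two, Matrix.vecHead, Matrix.vecTail]
lemma hw21 (α β γ : ℝ) : w α β γ e2 e1 = 0 := by
  simp only [w, W, Rc, A, T, nab, br, g, e1, e2, e3]; norm_num [Matrix.cons_val_two, Matrix.vecHead, Matrix.vecTail]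
lemma hw22 (α β γ : ℝ) : w α β γ e2 e2 = -γ^2 - 3*α*β/2 := by
  simp only [w, W, Rc, A, T, nab, br, g, e1, e2, e3]; norm_num [Matrix.cons_val_two, Matrix.vecHead, Matrix.vecTail]; ring
lemma hw23 (α β γ : ℝ) : w α β γ e2 e3 = -(α*γ)/2 := by
  simp only [w, W, Rc, A, T, nab, br, g, e1, e2, e3]; norm_num [Matrix.cons_val_two, Matrix.vecHead, Matrix.vecTail]; ring
lemma hw31 (α β γ : ℝ) : w α β γ e3 e1 = 0 := by
  simp only [w, W, Rc, A, T, nab, br, g, e1, e2, e3]; norm_num [Matrix.cons_val_two, Matrix.vecHead, Matrix.vecTail]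
lemma hw32 (α β γ : ℝ) : w α β γ e3 e2 = β*γ - α*γ := by
  simp only [w, W, Rc, A, T, nab, br, g, e1, e2, e3]; norm_num [Matrix.cons_val_two, Matrix.vecHead, Matrix.vecTail]; ring
lemma hw33 (α β γ : ℝ) : w α β γ e3 e3 = α*β - α^2/2 := by
  simp only [w, W, Rc, A, T, nab, br, g, e1, e2, e3]; norm_num [Matrix.cons_val_two, Matrix.vecHead, Matrix.vecTail]; ring

lemma hwx1 (γ : ℝ) (x : V) : w 0 0 γ x e1 = -2*γ^2 * x 0 := by
  simp only [w, W, Rc, A, T, nab, br, g, e1, e2, e3]; norm_num [Matrix.cons_val_two, Matrix.vecHead, Matrix.vecTail]; ring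
lemma hwx2 (γ : ℝ) (x : V) : w 0 0 γ x e2 = -γ^2 * x 1 := by
  simp only [w, W, Rc, A, T, nab, br, g, e1, e2, e3]; norm_num [Matrix.cons_val_two, Matrix.vecHead, Matrix.vecTail]; ring
lemma hwx3 (γ : ℝ) (x : V) : w 0 0 γ x e3 = 0 := by
  simp only [w, W, Rc, A, T, nab, br, g, e1, e2, e3]; norm_num [Matrix.cons_val_two, Matrix.vecHead, Matrix.vecTail]

lemma vdecomp (v : V) : v = v 0 • e1 + v 1 • e2 + v 2 • e3 := by
  funext i; fin_cases i <;> simp [e1, e2, e3]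

set_option maxHeartbeats 1000000 in
theorem g2_first_kind_algebraic_Wanas_soliton (α β γ : ℝ) (hγ : γ ≠ 0)
    (Wan : V →ₗ[ℝ] V) (hWan : ∀ x y, w α β γ x y = g (Wan x) y)
    (c : ℝ) (D : V →ₗ[ℝ] V) :
    (IsDeriv α β γ D ∧ ∀ x, Wan x = c • x + D x) ↔
      α = 0 ∧ β = 0 ∧ 2 * γ ^ 2 + c = 0 ∧
        D e1 = 0 ∧ D e2 = γ ^ 2 • e2 ∧ D e3 = (2 * γ ^ 2) • e3 := by
  have hγ2 : 0 < γ^2 := by positivity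
  constructor
  · rintro ⟨hDer, hsol⟩
    -- components of D on basis
    have hD1 : D e1 = ![α*β/2 - 2*β^2 - 2*γ^2 - c, 0, 0] := by
      have h1 := hWan e1 e1; have h2 := hWan e1 e2; have h3 := hWan e1 e3
      rw [hw11] at h1; rw [hw12] at h2; rw [hw13] at h3
      have q0 := congrFun (hsol e1) 0; have q1 := congrFun (hsol e1) 1
      have q2 := congrFun (hsol e1) 2
      simp [g, e1, e2, e3] at h1 h2 h3 q0 q1 q2
      funext i; fin_cases i <;> simp [e1, e2, e3] <;> linarith
    have hD2 : D e2 = ![0, -γ^2 - 3*α*β/2 - c, α*γ/2] := by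
      have h1 := hWan e2 e1; have h2 := hWan e2 e2; have h3 := hWan e2 e3
      rw [hw21] at h1; rw [hw22] at h2; rw [hw23] at h3
      have q0 := congrFun (hsol e2) 0; have q1 := congrFun (hsol e2) 1
      have q2 := congrFun (hsol e2) 2
      simp [g, e1, e2, e3] at h1 h2 h3 q0 q1 q2
      funext i; fin_cases i <;> simp [e1, e2, e3] <;> linarith
    have hD3 : D e3 = ![0, β*γ - α*γ, α^2/2 - α*β - c] := by
      have h1 := hWan e3 e1; have h2 := hWan e3 e2; have h3 := hWan e3 e3
      rw [hw31] at h1; rw [hw32] at h2; rw [hw33] at h3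
      have q0 := congrFun (hsol e3) 0; have q1 := congrFun (hsol e3) 1
      have q2 := congrFun (hsol e3) 2
      simp [g, e1, e2, e3] at h1 h2 h3 q0 q1 q2
      funext i; fin_cases i <;> simp [e1, e2, e3] <;> linarith
    -- derivation equations
    have hb12 : br α β γ e1 e2 = γ • e2 - β • e3 := by
      funext i; fin_cases i <;> simp [br, e1, e2, e3]
    have hb13 : br α β γ e1 e3 = -(β • e2) - γ • e3 := by
      funext i; fin_cases i <;> simp [br, e1, e2, e3]
    have hb23 : br α β γ e2 e3 = α • e1 := by
      funext i; fin_cases i <;> simp [br, e1, e2, e3]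
    have K12 := hDer e1 e2
    rw [hb12, map_sub, map_smul, map_smul, hD1, hD2, hD3] at K12
    have E1 := congrFun K12 1; have E2 := congrFun K12 2
    simp [br, e1, e2, e3] at E1 E2
    have K13 := hDer e1 e3
    rw [hb13, map_sub, map_neg, map_smul, map_smul, hD1, hD2, hD3] at K13
    have E3 := congrFun K13 1
    simp [br, e1, e2, e3] at E3
    have K23 := hDer e2 e3
    rw [hb23, map_smul, hD1, hD2, hD3] at K23
    have E4 := congrFun K23 0
    simp [br, e1, e2, e3] at E4
    -- solve
    have hc : c = -(α*β) - β^2 - 2*γ^2 := by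
      have h : γ * (c - (-(α*β) - β^2 - 2*γ^2)) = 0 := by linear_combination E1
      rcases mul_eq_zero.mp h with h' | h'
      · exact absurd h' hγ
      · linarith
    have hα : α = 0 := by
      have h4 : α * (2*α*β - 3*β^2 - 3*γ^2 - α^2/2) = 0 := by
        linear_combination E4 - α * hc
      rcases mul_eq_zero.mp h4 with h' | h'
      · exact h'
      · exfalso; nlinarith [sq_nonneg (2*β - α), sq_nonneg β]
    subst hα
    have hβ : β = 0 := by
      have h5 : β * (β^2 + γ^2) = 0 := by linear_combination -E2 - β * hc
      rcases mul_eq_zero.mp h5 with h' | h'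
      · exact h'
      · exfalso; nlinarith [sq_nonneg β]
    subst hβ
    have hcc : 2 * γ^2 + c = 0 := by
      simp at hc; linarith
    refine ⟨rfl, rfl, hcc, ?_, ?_, ?_⟩
    · rw [hD1]; funext i; fin_cases i <;> simp [e1, e2, e3] <;> linarith
    · rw [hD2]; funext i; fin_cases i <;> simp [e2] <;> try linarith
    · rw [hD3]; funext i; fin_cases i <;> simp [e3] <;> try linarith
  · rintro ⟨hα, hβ, hc, h1, h2, h3⟩
    subst hα; subst hβ
    have hcc : c = -(2*γ^2) := by linarith
    have hDx : ∀ v : V, D v = ![0, γ^2 * v 1, 2*γ^2 * v 2] := by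
      intro v
      have hv := vdecomp v
      calc D v = D (v 0 • e1 + v 1 • e2 + v 2 • e3) := by rw [← hv]
        _ = v 0 • D e1 + v 1 • D e2 + v 2 • D e3 := by
            rw [map_add, map_add, map_smul, map_smul, map_smul]
        _ = ![0, γ^2 * v 1, 2*γ^2 * v 2] := by
            rw [h1, h2, h3]; funext i; fin_cases i <;> simp [e2, e3] <;> ring
    constructor
    · intro x y
      rw [hDx x, hDx y, hDx (br 0 0 γ x y)]
      funext i; fin_cases i <;>
        simp [br, e1, e2, e3] <;> ring
    · intro x
      have q1 : Wan x 0 = -2*γ^2 * x 0 := by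
        have h := hWan x e1; rw [hwx1] at h; simp [g, e1] at h; linarith
      have q2 : Wan x 1 = -γ^2 * x 1 := by
        have h := hWan x e2; rw [hwx2] at h; simp [g, e2] at h; linarith
      have q3 : Wan x 2 = 0 := by
        have h := hWan x e3; rw [hwx3] at h; simp [g, e3] at h; linarith
      rw [hDx x]
      funext i; fin_cases i
      · simp [q1, hcc]; try ring
      · simp [q2, hcc]; try ring
      · simp [q3, hcc]; try ring
end
end

section
/- Let α, β, γ ∈ ℝ with γ ≠ 0. Then (𝔤₂, g, J) is a second kind algebraic Wanas soliton associated to the canonical connection ∇⁰ if and only if α = β = 0 and the soliton constant satisfies 2γ² + c = 0; in that case the derivation D satisfies De₁ = 0, De₂ = γ²e₂, De₃ = 2γ²e₃. -/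
set_option maxHeartbeats 1600000

noncomputable section

lemma wt_eval (α β γ : ℝ) (x y : V) : wt α β γ x y =
    (-2*γ^2 - 2*β^2 + α*β/2) * (x 0 * y 0) + (-γ^2 - 3/2*(α*β)) * (x 1 * y 1) +
    (α*β - α^2/2) * (x 2 * y 2) + (β*γ/2 - 3/4*(α*γ)) * (x 1 * y 2 + x 2 * y 1) := by
  simp [wt, w, W, Rc, A, T, nab, br, g, e1, e2, e3]
  ring

theorem g2_second_kind_algebraic_Wanas_soliton (α β γ : ℝ) (hγ : γ ≠ 0)
    (tWan : V →ₗ[ℝ] V) (htWan : ∀ x y, wt α β γ x y = g (tWan x) y)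
    (c : ℝ) (D : V →ₗ[ℝ] V) :
    (IsDeriv α β γ D ∧ ∀ x, tWan x = c • x + D x) ↔
      α = 0 ∧ β = 0 ∧ 2 * γ ^ 2 + c = 0 ∧
        D e1 = 0 ∧ D e2 = γ ^ 2 • e2 ∧ D e3 = (2 * γ ^ 2) • e3 := by
  have hT : ∀ x : V, tWan x = ![wt α β γ x e1, wt α β γ x e2, -wt α β γ x e3] := by
    intro x
    funext i
    fin_cases i
    · have h := htWan x e1; simp [g, e1] at h; simpa [e1] using h.symm
    · have h := htWan x e2; simp [g, e2] at h; simpa [e2] using h.symm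
    · have h := htWan x e3; simp [g, e3] at h
      simp [e3]
      linarith
  have hDapp : ∀ v : V, D v = v 0 • D e1 + v 1 • D e2 + v 2 • D e3 := by
    intro v
    have hv : v = v 0 • e1 + v 1 • e2 + v 2 • e3 := by
      funext i; fin_cases i <;> simp [e1, e2, e3]
    conv_lhs => rw [hv]
    simp
  constructor
  · rintro ⟨hD, hS⟩
    have hDe1 : D e1 = ![(-2*γ^2 - 2*β^2 + α*β/2) - c, 0, 0] := by
      have h : D e1 = tWan e1 - c • e1 := by rw [hS e1]; abel
      rw [hT e1] at h
      funext i
      rw [h]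
      fin_cases i <;> simp [wt_eval, e1, e2, e3] <;> ring
    have hDe2 : D e2 = ![0, (-γ^2 - 3/2*(α*β)) - c, -(β*γ/2 - 3/4*(α*γ))] := by
      have h : D e2 = tWan e2 - c • e2 := by rw [hS e2]; abel
      rw [hT e2] at h
      funext i
      rw [h]
      fin_cases i <;> simp [wt_eval, e1, e2, e3] <;> ring
    have hDe3 : D e3 = ![0, (β*γ/2 - 3/4*(α*γ)), -(α*β - α^2/2) - c] := by
      have h : D e3 = tWan e3 - c • e3 := by rw [hS e3]; abel
      rw [hT e3] at h
      funext i
      rw [h]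
      fin_cases i <;> simp [wt_eval, e1, e2, e3] <;> ring
    have hd12 := hD e1 e2
    have hd13 := hD e1 e3
    have hd23 := hD e2 e3
    rw [hDapp (br α β γ e1 e2)] at hd12
    rw [hDapp (br α β γ e1 e3)] at hd13
    rw [hDapp (br α β γ e2 e3)] at hd23
    rw [hDe1, hDe2, hDe3] at hd12 hd13 hd23
    have P1 := congrFun hd12 1
    have P2 := congrFun hd12 2
    have P3 := congrFun hd13 1
    have P5 := congrFun hd23 0
    simp [br, e1, e2, e3] at P1 P2 P3 P5
    have hgsq : (0:ℝ) < γ^2 := by positivity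
    have hc : 2*γ^2 + α*β + β^2 + c = 0 := by
      have h2 : γ * (2*γ^2 + α*β + β^2 + c) = 0 := by linear_combination P1
      rcases mul_eq_zero.mp h2 with h | h
      · exact absurd h hγ
      · exact h
    have hα : α = 0 := by
      have h3 : α * (6*γ^2 + (2*β - α)^2 + 2*β^2) = 0 := by
        linear_combination (-2) * P5 + (2*α) * hc
      rcases mul_eq_zero.mp h3 with h | h
      · exact h
      · nlinarith [sq_nonneg (2*β - α), sq_nonneg β]
    subst hα
    have hβ : β = 0 := by
      have h4 : β * (2*γ^2 + β^2) = 0 := by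
        linear_combination (-1) * P2 + (-β) * hc
      rcases mul_eq_zero.mp h4 with h | h
      · exact h
      · nlinarith [sq_nonneg β]
    subst hβ
    refine ⟨rfl, rfl, by linear_combination hc, ?_, ?_, ?_⟩
    · rw [hDe1]; funext i; fin_cases i <;> simp <;> linarith
    · rw [hDe2]; funext i; fin_cases i <;> simp [e2] <;> linarith
    · rw [hDe3]; funext i; fin_cases i <;> simp [e3] <;> linarith
  · rintro ⟨hα, hβ, hc, h1, h2, h3⟩
    subst hα; subst hβ
    have hc' : c = -(2*γ^2) := by linarith
    constructor
    · intro x y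
      rw [hDapp (br 0 0 γ x y), hDapp x, hDapp y, h1, h2, h3]
      funext i
      fin_cases i <;> simp [br, e1, e2, e3] <;> ring
    · intro x
      rw [hT x, hDapp x, h1, h2, h3]
      funext i
      fin_cases i <;> simp [wt_eval, e1, e2, e3, hc'] <;> ring
end
end
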